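/- arXiv:1807.07707 — 2 statements merged into one kernel-verified Lean document; each statement's English description precedes it below -/
import Mathlib

section
/- Let L₂, σ² > 0 and γ₁, γ₂ ∈ (0,1) with γ₁ + γ₂ = 1. Then ∫_0^∞ (1/2) e^{-x/2} log₂(1 + γ₁L₂x/(γ₂L₂x + 2σ²)) dx = C₁(L₂/σ²) − C₁(γ₂L₂/σ²). (This is the closed-form ergodic rate of the strong user's message in uni-directional cooperative NOMA.) -/
open Real MeasureTheory Set

open Filter Topology

lemma intOn_log (a : ℝ) (ha : 0 < a) :
    IntegrableOn (fun x : ℝ => (1/2) * Real.exp (-x/2) * Real.log (1 + a*x)) (Ioi 0) := by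
  have hmble : AEStronglyMeasurable (fun x : ℝ => (1/2) * Real.exp (-x/2) * Real.log (1 + a*x))
      (volume.restrict (Ioi 0)) := by
    apply ContinuousOn.aestronglyMeasurable _ measurableSet_Ioi
    apply ContinuousOn.mul (by fun_prop)
    intro x hx
    have : (0:ℝ) < 1 + a*x := by nlinarith [mem_Ioi.mp hx]
    have hc : ContinuousAt (fun y : ℝ => 1 + a*y) x := by fun_prop
    exact (hc.log this.ne').continuousWithinAt
  have hbound : IntegrableOn (fun x : ℝ => (a/2) * (x ^ (1:ℝ) * Real.exp (-(1/2) * x ^ (1:ℝ)))) (Ioi 0) := by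
    exact ((integrableOn_rpow_mul_exp_neg_mul_rpow (by norm_num) (by norm_num) (by norm_num)).const_mul _)
  refine Integrable.mono' hbound hmble ?_
  filter_upwards [ae_restrict_mem measurableSet_Ioi] with x hx
  have hx0 : (0:ℝ) < x := hx
  have h1 : (0:ℝ) < 1 + a*x := by nlinarith
  have hlog0 : 0 ≤ Real.log (1 + a*x) := Real.log_nonneg (by nlinarith)
  have hlog : Real.log (1 + a*x) ≤ a*x := by
    have := Real.log_le_sub_one_of_pos h1
    linarith
  rw [Real.norm_eq_abs, abs_of_nonneg (by positivity)]
  rw [Real.rpow_one]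
  have he : Real.exp (-(1/2)*x) = Real.exp (-x/2) := by ring_nf
  rw [he]
  have hexp : (0:ℝ) < Real.exp (-x/2) := Real.exp_pos _
  nlinarith [mul_le_mul_of_nonneg_left hlog hexp.le]

lemma intOn_rat (a : ℝ) (ha : 0 < a) :
    IntegrableOn (fun x : ℝ => Real.exp (-x/2) * (a / (1 + a*x))) (Ici 0) := by
  have hmble : AEStronglyMeasurable (fun x : ℝ => Real.exp (-x/2) * (a / (1 + a*x)))
      (volume.restrict (Ici 0)) := by
    apply ContinuousOn.aestronglyMeasurable _ measurableSet_Ici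
    apply ContinuousOn.mul (by fun_prop)
    intro x hx
    have h1 : (0:ℝ) < 1 + a*x := by nlinarith [mem_Ici.mp hx]
    have hc : ContinuousAt (fun y : ℝ => a / (1 + a*y)) x := by
      have c1 : ContinuousAt (fun y : ℝ => (a:ℝ)) x := by fun_prop
      have c2 : ContinuousAt (fun y : ℝ => 1 + a*y) x := by fun_prop
      exact c1.div c2 h1.ne'
    exact hc.continuousWithinAt
  have hbound : IntegrableOn (fun x : ℝ => a * Real.exp (-(1/2) * x)) (Ici 0) := by
    rw [integrableOn_Ici_iff_integrableOn_Ioi]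
    exact (exp_neg_integrableOn_Ioi 0 (by norm_num)).const_mul a
  refine Integrable.mono' hbound hmble ?_
  filter_upwards [ae_restrict_mem measurableSet_Ici] with x hx
  have hx0 : (0:ℝ) ≤ x := hx
  have h1 : (1:ℝ) ≤ 1 + a*x := by nlinarith
  rw [Real.norm_eq_abs, abs_of_nonneg (by positivity)]
  have : a / (1 + a*x) ≤ a := by
    rw [div_le_iff₀ (by linarith)]; nlinarith
  have he : Real.exp (-(1/2)*x) = Real.exp (-x/2) := by ring_nf
  rw [he]
  nlinarith [Real.exp_pos (-x/2)]

lemma intOn_tail (c : ℝ) (hc : 0 < c) :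
    IntegrableOn (fun t : ℝ => t⁻¹ * Real.exp (-t/c)) (Ici 1) := by
  have hmble : AEStronglyMeasurable (fun t : ℝ => t⁻¹ * Real.exp (-t/c))
      (volume.restrict (Ici 1)) := by
    apply ContinuousOn.aestronglyMeasurable _ measurableSet_Ici
    intro t ht
    have h1 : (0:ℝ) < t := lt_of_lt_of_le one_pos (mem_Ici.mp ht)
    have hc' : ContinuousAt (fun t : ℝ => t⁻¹ * Real.exp (-t/c)) t := by
      exact ((continuousAt_inv₀ h1.ne').mul (by fun_prop))
    exact hc'.continuousWithinAt
  have hbound : IntegrableOn (fun t : ℝ => Real.exp (-(1/c) * t)) (Ici 1) := by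
    rw [integrableOn_Ici_iff_integrableOn_Ioi]
    exact exp_neg_integrableOn_Ioi 1 (by positivity)
  refine Integrable.mono' hbound hmble ?_
  filter_upwards [ae_restrict_mem measurableSet_Ici] with t ht
  have h1 : (1:ℝ) ≤ t := ht
  have h0 : (0:ℝ) < t := lt_of_lt_of_le one_pos h1
  rw [Real.norm_eq_abs, abs_of_nonneg (by positivity)]
  have he : Real.exp (-(1/c)*t) = Real.exp (-t/c) := by ring_nf
  rw [he]
  have : t⁻¹ ≤ 1 := by rw [inv_le_one_iff₀]; right; exact h1
  nlinarith [Real.exp_pos (-t/c)]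

lemma key (c : ℝ) (hc : 0 < c) :
    ∫ x in Ioi (0:ℝ), (1/2) * Real.exp (-x/2) * Real.log (1 + (c/2)*x)
      = Real.exp (1/c) * ∫ t in Ioi (1:ℝ), t⁻¹ * Real.exp (-t/c) := by
  set a := c/2 with ha_def
  have ha : 0 < a := by positivity
  -- integration by parts
  have hderiv : ∀ x ∈ Ici (0:ℝ), HasDerivAt (fun x => -(Real.exp (-x/2) * Real.log (1+a*x)))
      ((1/2) * Real.exp (-x/2) * Real.log (1+a*x) - Real.exp (-x/2) * (a/(1+a*x))) x := by
    intro x hx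
    have h1 : (0:ℝ) < 1 + a*x := by nlinarith [mem_Ici.mp hx]
    have d0 : HasDerivAt (fun x : ℝ => -x/2) (-1/2:ℝ) x := by
      simpa using ((hasDerivAt_id x).neg.div_const 2)
    have d1 := (Real.hasDerivAt_exp (-x/2)).comp x d0
    have d2a : HasDerivAt (fun x : ℝ => 1 + a*x) a x := by
      simpa using ((hasDerivAt_id x).const_mul a).const_add 1
    have d2 := (Real.hasDerivAt_log h1.ne').comp x d2a
    have := (d1.mul d2).neg
    refine this.congr_deriv ?_
    simp only [Function.comp_apply]
    ring
  have hintrat : IntegrableOn (fun x : ℝ => Real.exp (-x/2) * (a/(1+a*x))) (Ioi 0) :=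
    (intOn_rat a ha).mono_set Ioi_subset_Ici_self
  have hFint : IntegrableOn (fun x : ℝ =>
      (1/2) * Real.exp (-x/2) * Real.log (1+a*x) - Real.exp (-x/2) * (a/(1+a*x))) (Ioi 0) :=
    (intOn_log a ha).sub hintrat
  have htend : Tendsto (fun x : ℝ => -(Real.exp (-x/2) * Real.log (1+a*x))) atTop (𝓝 0) := by
    rw [show (0:ℝ) = -0 by norm_num]
    apply Tendsto.neg
    have hg : Tendsto (fun x : ℝ => a * (x ^ (1:ℝ) * Real.exp (-(1/2) * x))) atTop (𝓝 (a * 0)) :=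
      (tendsto_rpow_mul_exp_neg_mul_atTop_nhds_zero 1 (1/2) (by norm_num)).const_mul a
    rw [mul_zero] at hg
    apply squeeze_zero' ?_ ?_ hg
    · filter_upwards [eventually_ge_atTop (0:ℝ)] with x hx
      have : (1:ℝ) ≤ 1 + a*x := by nlinarith
      have := Real.log_nonneg this
      positivity
    · filter_upwards [eventually_ge_atTop (0:ℝ)] with x hx
      have h1 : (0:ℝ) < 1 + a*x := by nlinarith
      have hlog : Real.log (1 + a*x) ≤ a*x := by
        have := Real.log_le_sub_one_of_pos h1; linarith
      rw [Real.rpow_one]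
      have he : Real.exp (-(1/2)*x) = Real.exp (-x/2) := by ring_nf
      rw [he]
      nlinarith [Real.exp_pos (-x/2), mul_le_mul_of_nonneg_left hlog (Real.exp_pos (-x/2)).le]
  have hibp := integral_Ioi_of_hasDerivAt_of_tendsto' hderiv hFint htend
  rw [integral_sub (intOn_log a ha) hintrat] at hibp
  norm_num at hibp
  have heq1 : ∫ x in Ioi (0:ℝ), (1/2) * Real.exp (-x/2) * Real.log (1+a*x)
      = ∫ x in Ioi (0:ℝ), Real.exp (-x/2) * (a/(1+a*x)) := by linarith
  rw [heq1]
  -- change of variables u = 1 + a x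
  have hcv : (∫ x in Ioi (0:ℝ),
        ((fun u : ℝ => u⁻¹ * Real.exp (-u/c)) ∘ (fun x : ℝ => 1 + a*x)) x * a)
      = ∫ u in Ioi (1:ℝ), u⁻¹ * Real.exp (-u/c) := by
    have hf : ContinuousOn (fun x : ℝ => 1 + a*x) (Ici 0) := by fun_prop
    have hft : Tendsto (fun x : ℝ => 1 + a*x) atTop atTop :=
      tendsto_atTop_add_const_left atTop 1 (Tendsto.const_mul_atTop ha tendsto_id)
    have hff' : ∀ x ∈ Ioi (0:ℝ), HasDerivWithinAt (fun x : ℝ => 1 + a*x) a (Ioi x) x := by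
      intro x _
      have : HasDerivAt (fun x : ℝ => 1 + a*x) a x := by
        simpa using ((hasDerivAt_id x).const_mul a).const_add 1
      exact this.hasDerivWithinAt
    have himIoi : (fun x : ℝ => 1 + a*x) '' Ioi 0 ⊆ Ioi 1 := by
      rintro u ⟨x, hx, rfl⟩
      have : (0:ℝ) < x := hx
      simp only [mem_Ioi]
      nlinarith
    have himIci : (fun x : ℝ => 1 + a*x) '' Ici 0 ⊆ Ici 1 := by
      rintro u ⟨x, hx, rfl⟩
      have : (0:ℝ) ≤ x := hx
      simp only [mem_Ici]
      nlinarith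
    have hg_cont : ContinuousOn (fun u : ℝ => u⁻¹ * Real.exp (-u/c))
        ((fun x : ℝ => 1 + a*x) '' Ioi 0) := by
      intro u hu
      have h1 : (1:ℝ) < u := himIoi hu
      have h0 : (0:ℝ) < u := lt_trans one_pos h1
      exact ((continuousAt_inv₀ h0.ne').mul (by fun_prop)).continuousWithinAt
    have hg1 : IntegrableOn (fun u : ℝ => u⁻¹ * Real.exp (-u/c))
        ((fun x : ℝ => 1 + a*x) '' Ici 0) := (intOn_tail c hc).mono_set himIci
    have hg2 : IntegrableOn
        (fun x : ℝ => ((fun u : ℝ => u⁻¹ * Real.exp (-u/c)) ∘ (fun x : ℝ => 1 + a*x)) x * a)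
        (Ici 0) := by
      have hbase : IntegrableOn
          (fun x : ℝ => Real.exp (-1/c) * (Real.exp (-x/2) * (a/(1+a*x)))) (Ici 0) :=
        (intOn_rat a ha).const_mul (Real.exp (-1/c))
      apply hbase.congr_fun _ measurableSet_Ici
      intro x hx
      have hx0 : (0:ℝ) ≤ x := hx
      have h1 : (0:ℝ) < 1 + a*x := by nlinarith
      simp only [Function.comp_apply]
      have hexp : Real.exp (-(1+a*x)/c) = Real.exp (-1/c) * Real.exp (-x/2) := by
        rw [← Real.exp_add]
        congr 1
        rw [ha_def]
        field_simp
        ring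
      rw [hexp]
      field_simp
    have := integral_comp_mul_deriv_Ioi hf hft hff' hg_cont hg1 hg2
    simpa using this
  -- simplify the substituted integrand
  have hsub : (∫ x in Ioi (0:ℝ),
        ((fun u : ℝ => u⁻¹ * Real.exp (-u/c)) ∘ (fun x : ℝ => 1 + a*x)) x * a)
      = Real.exp (-1/c) * ∫ x in Ioi (0:ℝ), Real.exp (-x/2) * (a/(1+a*x)) := by
    rw [← integral_const_mul]
    apply setIntegral_congr_fun measurableSet_Ioi
    intro x hx
    have hx0 : (0:ℝ) < x := hx
    have h1 : (0:ℝ) < 1 + a*x := by nlinarith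
    simp only [Function.comp_apply]
    have hexp : Real.exp (-(1+a*x)/c) = Real.exp (-1/c) * Real.exp (-x/2) := by
      rw [← Real.exp_add]
      congr 1
      rw [ha_def]
      field_simp
      ring
    rw [hexp]
    field_simp
  rw [hsub] at hcv
  rw [← hcv]
  rw [← mul_assoc, ← Real.exp_add, show 1/c + -1/c = 0 by ring]
  simp

/-- `C₁(x) = (1/ln 2) · e^{1/x} · ∫_1^∞ t⁻¹ e^{-t/x} dt`. -/
noncomputable def C1 (x : ℝ) : ℝ :=
  (1 / Real.log 2) * Real.exp (1 / x) * ∫ t in Set.Ioi (1:ℝ), t⁻¹ * Real.exp (-t / x)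

theorem stmt6 (L2 σ2 γ1 γ2 : ℝ) (hL2 : 0 < L2) (hσ : 0 < σ2)
    (hγ1 : γ1 ∈ Set.Ioo (0:ℝ) 1) (hγ2 : γ2 ∈ Set.Ioo (0:ℝ) 1) (hsum : γ1 + γ2 = 1) :
    (∫ x in Set.Ioi (0:ℝ),
      (1/2) * Real.exp (-x/2) * Real.logb 2 (1 + γ1 * L2 * x / (γ2 * L2 * x + 2 * σ2)))
      = C1 (L2 / σ2) - C1 (γ2 * L2 / σ2) := by
  obtain ⟨hγ1l, hγ1u⟩ := hγ1
  obtain ⟨hγ2l, hγ2u⟩ := hγ2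
  set c1 : ℝ := L2 / σ2 with hc1_def
  set c2 : ℝ := γ2 * L2 / σ2 with hc2_def
  have hc1 : 0 < c1 := by positivity
  have hc2 : 0 < c2 := by positivity
  have hstep : ∀ x ∈ Ioi (0:ℝ),
      (1/2) * Real.exp (-x/2) * Real.logb 2 (1 + γ1 * L2 * x / (γ2 * L2 * x + 2 * σ2))
      = (1 / Real.log 2) * ((1/2) * Real.exp (-x/2) * Real.log (1 + (c1/2)*x))
        - (1 / Real.log 2) * ((1/2) * Real.exp (-x/2) * Real.log (1 + (c2/2)*x)) := by
    intro x hx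
    have hx0 : (0:ℝ) < x := hx
    have hA : (0:ℝ) < 1 + (c1/2)*x := by positivity
    have hB : (0:ℝ) < 1 + (c2/2)*x := by positivity
    have hden : (0:ℝ) < γ2 * L2 * x + 2 * σ2 := by positivity
    have harg : 1 + γ1 * L2 * x / (γ2 * L2 * x + 2 * σ2)
        = (1 + (c1/2)*x) / (1 + (c2/2)*x) := by
      rw [hc1_def, hc2_def]
      have hγ1' : γ1 = 1 - γ2 := by linarith
      field_simp
      ring_nf
      rw [hγ1']
      ring
    rw [harg, Real.logb, Real.log_div hA.ne' hB.ne']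
    ring
  rw [setIntegral_congr_fun measurableSet_Ioi hstep]
  have hi1 : IntegrableOn
      (fun x : ℝ => (1 / Real.log 2) * ((1/2) * Real.exp (-x/2) * Real.log (1 + (c1/2)*x)))
      (Ioi 0) := (intOn_log (c1/2) (by positivity)).const_mul _
  have hi2 : IntegrableOn
      (fun x : ℝ => (1 / Real.log 2) * ((1/2) * Real.exp (-x/2) * Real.log (1 + (c2/2)*x)))
      (Ioi 0) := (intOn_log (c2/2) (by positivity)).const_mul _
  rw [integral_sub hi1 hi2, integral_const_mul, integral_const_mul, key c1 hc1, key c2 hc2]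
  simp only [C1]
  ring
end

section
/- For every β ∈ (0,1), the function x ↦ C₁(x) − C₁(βx) is increasing on (0,∞): for all real x, y with 0 < x ≤ y, one has C₁(x) − C₁(βx) ≤ C₁(y) − C₁(βy). -/
open Real MeasureTheory Set

lemma integral_comp_add_right_Ioi (g : ℝ → ℝ) (a d : ℝ) :
    (∫ x in Ioi a, g (x + d)) = ∫ x in Ioi (a + d), g x := by
  rw [← integral_indicator measurableSet_Ioi, ← integral_indicator measurableSet_Ioi,
    ← integral_add_right_eq_self ((Ioi (a + d)).indicator g) d]
  congr 1
  ext x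
  by_cases h : a < x
  · rw [indicator_of_mem (by simpa using h), indicator_of_mem (by simpa using h)]
  · rw [indicator_of_notMem (by simpa using h), indicator_of_notMem (by simpa using h)]

/-- Representation: `C1 x = (1/ln 2) ∫_0^∞ e^{-w/x}/(1+w) dw`. -/
lemma C1_rep (x : ℝ) (hx : 0 < x) :
    C1 x = (1 / Real.log 2) * ∫ w in Ioi (0:ℝ), (1 + w)⁻¹ * Real.exp (-w / x) := by
  unfold C1
  have h1 : (∫ w in Ioi (0:ℝ), (1 + w)⁻¹ * Real.exp (-w / x))
      = ∫ w in Ioi (0:ℝ), Real.exp (1 / x) * ((w + 1)⁻¹ * Real.exp (-(w + 1) / x)) := by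
    refine setIntegral_congr_fun measurableSet_Ioi fun w _ => ?_
    rw [← mul_assoc, mul_comm (Real.exp (1 / x)) ((w + 1)⁻¹), mul_assoc, ← Real.exp_add,
      add_comm (1:ℝ) w]
    congr 2
    field_simp
    ring
  rw [h1, integral_const_mul,
    show (fun w : ℝ => (w + 1)⁻¹ * Real.exp (-(w + 1) / x))
      = fun w : ℝ => (fun t : ℝ => t⁻¹ * Real.exp (-t / x)) (w + 1) from rfl,
    integral_comp_add_right_Ioi (fun t : ℝ => t⁻¹ * Real.exp (-t / x)) 0 1, zero_add]
  ring

lemma C1_rep_beta (β x : ℝ) (hβ : 0 < β) (hx : 0 < x) :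
    C1 (β * x) = (1 / Real.log 2) * ∫ w in Ioi (0:ℝ),
      β * ((1 + β * w)⁻¹ * Real.exp (-w / x)) := by
  rw [C1_rep (β * x) (mul_pos hβ hx), integral_const_mul]
  congr 1
  have h := integral_comp_mul_left_Ioi
    (fun w => (1 + w)⁻¹ * Real.exp (-w / (β * x))) 0 hβ
  rw [mul_zero] at h
  have h2 : (∫ u in Ioi (0:ℝ), (1 + β * u)⁻¹ * Real.exp (-u / x))
      = β⁻¹ • ∫ w in Ioi (0:ℝ), (1 + w)⁻¹ * Real.exp (-w / (β * x)) := by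
    rw [← h]
    refine setIntegral_congr_fun measurableSet_Ioi fun u _ => ?_
    congr 2
    field_simp
  rw [h2, smul_eq_mul, ← mul_assoc, mul_inv_cancel₀ hβ.ne', one_mul]

lemma coef_nonneg {β w : ℝ} (hβ1 : β ≤ 1) (h1 : (0:ℝ) < 1 + w) (h2 : (0:ℝ) < 1 + β * w) :
    0 ≤ (1 + w)⁻¹ - β * (1 + β * w)⁻¹ := by
  rw [sub_nonneg, ← div_eq_mul_inv, div_le_iff₀ h2, inv_mul_eq_div, le_div_iff₀ h1]
  nlinarith

lemma aux_integrable (β x : ℝ) (hβ0 : 0 < β) (hβ1 : β < 1) (hx : 0 < x) :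
    IntegrableOn (fun w => ((1 + w)⁻¹ - β * (1 + β * w)⁻¹) * Real.exp (-w / x))
      (Ioi (0:ℝ)) := by
  have hexp : IntegrableOn (fun w => Real.exp (-x⁻¹ * w)) (Ioi (0:ℝ)) :=
    exp_neg_integrableOn_Ioi 0 (inv_pos.mpr hx)
  apply hexp.mono'
  · apply Measurable.aestronglyMeasurable
    fun_prop
  · filter_upwards [ae_restrict_mem measurableSet_Ioi] with w hw
    have hw0 : (0:ℝ) < w := hw
    have h1 : (0:ℝ) < 1 + w := by linarith
    have h2 : (0:ℝ) < 1 + β * w := by nlinarith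
    have hc0 : 0 ≤ (1 + w)⁻¹ - β * (1 + β * w)⁻¹ := coef_nonneg hβ1.le h1 h2
    have hc1 : (1 + w)⁻¹ - β * (1 + β * w)⁻¹ ≤ 1 := by
      have hle : (1 + w)⁻¹ ≤ 1 := by rw [inv_le_one_iff₀]; right; linarith
      have hnn : 0 ≤ β * (1 + β * w)⁻¹ := by positivity
      linarith
    rw [Real.norm_eq_abs, abs_mul, abs_of_nonneg hc0, abs_of_nonneg (Real.exp_pos _).le,
      show -w / x = -x⁻¹ * w by ring]
    nlinarith [Real.exp_pos (-x⁻¹ * w)]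

lemma one_side_integrable (x : ℝ) (hx : 0 < x) :
    IntegrableOn (fun w => (1 + w)⁻¹ * Real.exp (-w / x)) (Ioi (0:ℝ)) := by
  have hexp : IntegrableOn (fun w => Real.exp (-x⁻¹ * w)) (Ioi (0:ℝ)) :=
    exp_neg_integrableOn_Ioi 0 (inv_pos.mpr hx)
  apply hexp.mono'
  · apply Measurable.aestronglyMeasurable
    fun_prop
  · filter_upwards [ae_restrict_mem measurableSet_Ioi] with w hw
    have hw0 : (0:ℝ) < w := hw
    have h1 : (0:ℝ) < 1 + w := by linarith
    rw [Real.norm_eq_abs, abs_mul, abs_of_nonneg (by positivity : (0:ℝ) ≤ (1 + w)⁻¹),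
      abs_of_nonneg (Real.exp_pos _).le, show -w / x = -x⁻¹ * w by ring]
    have hle : (1 + w)⁻¹ ≤ 1 := by rw [inv_le_one_iff₀]; right; linarith
    nlinarith [Real.exp_pos (-x⁻¹ * w)]

lemma beta_side_integrable (β x : ℝ) (hβ0 : 0 < β) (hβ1 : β < 1) (hx : 0 < x) :
    IntegrableOn (fun w => β * ((1 + β * w)⁻¹ * Real.exp (-w / x))) (Ioi (0:ℝ)) := by
  have hexp : IntegrableOn (fun w => Real.exp (-x⁻¹ * w)) (Ioi (0:ℝ)) :=
    exp_neg_integrableOn_Ioi 0 (inv_pos.mpr hx)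
  apply hexp.mono'
  · apply Measurable.aestronglyMeasurable
    fun_prop
  · filter_upwards [ae_restrict_mem measurableSet_Ioi] with w hw
    have hw0 : (0:ℝ) < w := hw
    have h2 : (0:ℝ) < 1 + β * w := by nlinarith
    rw [Real.norm_eq_abs, abs_mul, abs_mul, abs_of_nonneg hβ0.le,
      abs_of_nonneg (by positivity : (0:ℝ) ≤ (1 + β * w)⁻¹),
      abs_of_nonneg (Real.exp_pos _).le, show -w / x = -x⁻¹ * w by ring]
    have hb : β * (1 + β * w)⁻¹ ≤ 1 := by
      rw [← div_eq_mul_inv, div_le_one h2]; nlinarith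
    nlinarith [Real.exp_pos (-x⁻¹ * w), mul_pos hβ0 (inv_pos.mpr h2)]

theorem stmt10 : ∀ β : ℝ, 0 < β → β < 1 → ∀ x y : ℝ, 0 < x → x ≤ y →
    C1 x - C1 (β * x) ≤ C1 y - C1 (β * y) := by
  intro β hβ0 hβ1 x y hx hxy
  have hy : 0 < y := lt_of_lt_of_le hx hxy
  have key : ∀ z : ℝ, 0 < z → C1 z - C1 (β * z) =
      (1 / Real.log 2) * ∫ w in Ioi (0:ℝ),
        ((1 + w)⁻¹ - β * (1 + β * w)⁻¹) * Real.exp (-w / z) := by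
    intro z hz
    rw [C1_rep z hz, C1_rep_beta β z hβ0 hz, ← mul_sub]
    congr 1
    rw [← integral_sub (one_side_integrable z hz) (beta_side_integrable β z hβ0 hβ1 hz)]
    refine setIntegral_congr_fun measurableSet_Ioi fun w _ => ?_
    ring
  rw [key x hx, key y hy]
  have hlog : (0:ℝ) ≤ 1 / Real.log 2 := by
    have := Real.log_pos (by norm_num : (1:ℝ) < 2)
    positivity
  apply mul_le_mul_of_nonneg_left _ hlog
  apply setIntegral_mono_on (aux_integrable β x hβ0 hβ1 hx)
    (aux_integrable β y hβ0 hβ1 hy) measurableSet_Ioi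
  intro w hw
  have hw0 : (0:ℝ) < w := hw
  have h1 : (0:ℝ) < 1 + w := by linarith
  have h2 : (0:ℝ) < 1 + β * w := by nlinarith
  have hc0 : 0 ≤ (1 + w)⁻¹ - β * (1 + β * w)⁻¹ := coef_nonneg hβ1.le h1 h2
  apply mul_le_mul_of_nonneg_left _ hc0
  apply Real.exp_le_exp.mpr
  rw [neg_div, neg_div, neg_le_neg_iff]
  exact div_le_div_of_nonneg_left hw0.le hx hxy
end
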